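/- Fix c_1, …, c_K > 0 and T > 0. The maximum of ∑_{k=1}^K τ_k · log₂(1 + c_k/τ_k) over τ_k > 0 with ∑_{k=1}^K τ_k = T is attained exactly when c_k/τ_k is the same constant for all k, i.e., τ_k* = T·c_k / (∑_{i=1}^K c_i), and the optimal value is T · log₂(1 + (∑_{k=1}^K c_k)/T). -/

import Mathlib

open Finset Real

lemma jensen_setup (K : ℕ) (hK : 0 < K) (c : Fin K → ℝ) (hc : ∀ k, 0 < c k)
    (T : ℝ) (hT : 0 < T) (τ : Fin K → ℝ) (hτ : ∀ k, 0 < τ k) (hsum : (∑ k, τ k) = T) :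
    (∑ k, (τ k / T) • (1 + c k / τ k)) = 1 + (∑ k, c k) / T ∧
    (∑ k : Fin K, τ k / T) = 1 := by
  constructor
  · have : ∀ k : Fin K, (τ k / T) • (1 + c k / τ k) = τ k / T + c k / T := by
      intro k
      have h1 := (hτ k).ne'
      have h2 := hT.ne'
      rw [smul_eq_mul]
      field_simp
    rw [Finset.sum_congr rfl (fun k _ => this k), Finset.sum_add_distrib,
      ← Finset.sum_div, ← Finset.sum_div, hsum, div_self hT.ne']
  · rw [← Finset.sum_div, hsum, div_self hT.ne']

lemma key (K : ℕ) (hK : 0 < K) (c : Fin K → ℝ) (hc : ∀ k, 0 < c k)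
    (T : ℝ) (hT : 0 < T) (τ : Fin K → ℝ) (hτ : ∀ k, 0 < τ k) (hsum : (∑ k, τ k) = T) :
    ∑ k, (τ k / T) • Real.log (1 + c k / τ k) ≤ Real.log (1 + (∑ k, c k) / T) ∧
    ((∑ k, (τ k / T) • Real.log (1 + c k / τ k) = Real.log (1 + (∑ k, c k) / T)) ↔
      ∀ k, τ k = T * c k / (∑ i, c i)) := by
  obtain ⟨hcen, hw1⟩ := jensen_setup K hK c hc T hT τ hτ hsum
  have hS : 0 < ∑ i, c i :=
    Finset.sum_pos (fun i _ => hc i) (Finset.univ_nonempty_iff.2 (Fin.pos_iff_nonempty.mp hK))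
  have hmem : ∀ k ∈ Finset.univ, (1 + c k / τ k) ∈ Set.Ioi (0:ℝ) := by
    intro k _
    have := div_pos (hc k) (hτ k)
    simp [Set.mem_Ioi]; linarith
  have h₀ : ∀ k ∈ Finset.univ, 0 < τ k / T := fun k _ => div_pos (hτ k) hT
  constructor
  · have := strictConcaveOn_log_Ioi.concaveOn.le_map_sum (fun k hk => (h₀ k hk).le)
      hw1 hmem
    rwa [hcen] at this
  · have heq := strictConcaveOn_log_Ioi.map_sum_eq_iff h₀ hw1 hmem
    rw [hcen] at heq
    constructor
    · intro h
      have h2 := heq.1 h.symm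
      intro k
      have h3 := h2 k (Finset.mem_univ k)
      -- 1 + c k / τ k = 1 + S / T  →  τ k = T * c k / S
      have h4 : c k / τ k = (∑ i, c i) / T := by linarith
      rw [div_eq_div_iff (hτ k).ne' hT.ne'] at h4
      rw [eq_div_iff hS.ne']
      linear_combination -h4
    · intro h
      apply (heq.2 _).symm
      intro j _
      have hj := h j
      have : c j / τ j = (∑ i, c i) / T := by
        rw [hj, div_div_eq_mul_div, div_eq_div_iff (mul_pos hT (hc j)).ne' hT.ne']
        ring
      rw [this]

/-- Fix `c_1, …, c_K > 0` and `T > 0`. The maximum of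
`∑ τ_k · log₂(1 + c_k/τ_k)` over `τ_k > 0` with `∑ τ_k = T` is attained exactly
when `c_k/τ_k` is the same constant for all `k`, i.e. at `τ_k* = T·c_k/∑ c_i`,
and the optimal value is `T · log₂(1 + (∑ c_k)/T)`. -/
theorem stmt_2 (K : ℕ) (hK : 0 < K) (c : Fin K → ℝ) (hc : ∀ k, 0 < c k)
    (T : ℝ) (hT : 0 < T) :
    (∀ τ : Fin K → ℝ, (∀ k, 0 < τ k) → (∑ k, τ k) = T →
      ∑ k, τ k * Real.logb 2 (1 + c k / τ k) ≤
        T * Real.logb 2 (1 + (∑ k, c k) / T)) ∧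
    (∀ τ : Fin K → ℝ, (∀ k, 0 < τ k) → (∑ k, τ k) = T →
      ((∑ k, τ k * Real.logb 2 (1 + c k / τ k) =
          T * Real.logb 2 (1 + (∑ k, c k) / T)) ↔
        ∀ k, τ k = T * c k / (∑ i, c i))) ∧
    ((∀ k, 0 < T * c k / (∑ i, c i)) ∧ (∑ k, T * c k / (∑ i, c i)) = T) := by
  have hlog2 : (0:ℝ) < Real.log 2 := Real.log_pos one_lt_two
  have hS : 0 < ∑ i, c i :=
    Finset.sum_pos (fun i _ => hc i) (Finset.univ_nonempty_iff.2 (Fin.pos_iff_nonempty.mp hK))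
  have hrw : ∀ τ : Fin K → ℝ, (∀ k, 0 < τ k) →
      ∑ k, τ k * Real.logb 2 (1 + c k / τ k)
        = (T / Real.log 2) * ∑ k, (τ k / T) • Real.log (1 + c k / τ k) := by
    intro τ hτ
    rw [Finset.mul_sum]
    refine Finset.sum_congr rfl fun k _ => ?_
    rw [smul_eq_mul, Real.logb]
    field_simp
  have hrw2 : T * Real.logb 2 (1 + (∑ k, c k) / T)
      = (T / Real.log 2) * Real.log (1 + (∑ k, c k) / T) := by
    rw [Real.logb]; ring
  have hpos : 0 < T / Real.log 2 := div_pos hT hlog2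
  refine ⟨?_, ?_, ?_, ?_⟩
  · intro τ hτ hsum
    rw [hrw τ hτ, hrw2]
    exact mul_le_mul_of_nonneg_left (key K hK c hc T hT τ hτ hsum).1 hpos.le
  · intro τ hτ hsum
    rw [hrw τ hτ, hrw2, mul_right_inj' hpos.ne']
    exact (key K hK c hc T hT τ hτ hsum).2
  · intro k
    exact div_pos (mul_pos hT (hc k)) hS
  · rw [← Finset.sum_div, ← Finset.mul_sum, mul_div_assoc, div_self hS.ne', mul_one]
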